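/- Let n, m, n' and m' be nonnegative integers such that n+m = n'+m' and this common sum is odd. Then the partisan chocolate game positions PC(n,m) and PC(n',m') are equivalent (equal as normal-play game values). -/

import Mathlib

universe u

namespace SetTheory

/-- Pre-games, as in the older Mathlib (`SetTheory.PGame`, since removed from Mathlib). -/
inductive PGame : Type (u + 1)
  | mk : ∀ α β : Type u, (α → PGame) → (β → PGame) → PGame

namespace PGame

/-- Simultaneous definition of `x ≤ y` (first component) and `x ⧏ y` (second component). -/
noncomputable def leLF (x : PGame.{u}) : PGame.{u} → Prop × Prop :=
  PGame.rec (motive := fun _ => PGame.{u} → Prop × Prop)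
    (fun _ _ _ _ IHxL IHxR y =>
      PGame.rec (motive := fun _ => Prop × Prop)
        (fun yl yr yL yR IHyL IHyR =>
          ((∀ i, (IHxL i (mk yl yr yL yR)).2) ∧ (∀ j, (IHyR j).2),
            (∃ i, (IHyL i).1) ∨ (∃ j, (IHxR j (mk yl yr yL yR)).1))) y) x

noncomputable instance le : LE PGame.{u} :=
  ⟨fun x y => (leLF x y).1⟩

/-- Equivalence of pre-games, as in the older Mathlib. -/
def Equiv (x y : PGame.{u}) : Prop :=
  x ≤ y ∧ y ≤ x

end PGame

end SetTheory

open SetTheory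

/-- The partisan chocolate game position `PC n m`.
Left options: `PC n' m` with `n' < n` and `n' + m` even, and `PC n m'` with `m' < m` and
`n + m'` even. Right options: the same with "odd" in place of "even". -/
def PC : ℕ → ℕ → SetTheory.PGame
  | n, m =>
    SetTheory.PGame.mk
      {p : ℕ × ℕ // (p.2 = m ∧ p.1 < n ∧ Even (p.1 + m)) ∨ (p.1 = n ∧ p.2 < m ∧ Even (n + p.2))}
      {p : ℕ × ℕ // (p.2 = m ∧ p.1 < n ∧ Odd (p.1 + m)) ∨ (p.1 = n ∧ p.2 < m ∧ Odd (n + p.2))}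
      (fun p => PC p.1.1 p.1.2)
      (fun p => PC p.1.1 p.1.2)
termination_by n m => n + m
decreasing_by
  all_goals rcases p.2 with ⟨h1, h2, -⟩ | ⟨h1, h2, -⟩ <;> omega

namespace SetTheory

namespace PGame

/-- The "less or fuzzy" relation. -/
def LF (x y : PGame.{u}) : Prop :=
  (leLF x y).2

infix:50 " ⧏ " => SetTheory.PGame.LF

theorem mk_le_mk {xl xr : Type u} {xL : xl → PGame.{u}} {xR : xr → PGame.{u}}
    {yl yr : Type u} {yL : yl → PGame.{u}} {yR : yr → PGame.{u}} :
    mk xl xr xL xR ≤ mk yl yr yL yR ↔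
      (∀ i, xL i ⧏ mk yl yr yL yR) ∧ ∀ j, mk xl xr xL xR ⧏ yR j :=
  Iff.rfl

theorem lf_mk_of_le {x : PGame.{u}} {yl yr : Type u} {yL : yl → PGame.{u}}
    {yR : yr → PGame.{u}} (i : yl) (h : x ≤ yL i) : x ⧏ mk yl yr yL yR := by
  cases x
  exact Or.inl ⟨i, h⟩

theorem mk_lf_of_le {y : PGame.{u}} {xl xr : Type u} {xL : xl → PGame.{u}}
    {xR : xr → PGame.{u}} (j : xr) (h : xR j ≤ y) : mk xl xr xL xR ⧏ y := by
  cases y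
  exact Or.inr ⟨j, h⟩

end PGame

end SetTheory

open SetTheory.PGame

lemma PC_eq (n m : ℕ) : PC n m =
    SetTheory.PGame.mk
      {p : ℕ × ℕ // (p.2 = m ∧ p.1 < n ∧ Even (p.1 + m)) ∨ (p.1 = n ∧ p.2 < m ∧ Even (n + p.2))}
      {p : ℕ × ℕ // (p.2 = m ∧ p.1 < n ∧ Odd (p.1 + m)) ∨ (p.1 = n ∧ p.2 < m ∧ Odd (n + p.2))}
      (fun p => PC p.1.1 p.1.2)
      (fun p => PC p.1.1 p.1.2) := by
  rw [PC]

lemma PC_le {a b c d : ℕ}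
    (hL : ∀ p : ℕ × ℕ, ((p.2 = b ∧ p.1 < a ∧ Even (p.1 + b)) ∨ (p.1 = a ∧ p.2 < b ∧ Even (a + p.2))) →
      PC p.1 p.2 ⧏ PC c d)
    (hR : ∀ p : ℕ × ℕ, ((p.2 = d ∧ p.1 < c ∧ Odd (p.1 + d)) ∨ (p.1 = c ∧ p.2 < d ∧ Odd (c + p.2))) →
      PC a b ⧏ PC p.1 p.2) : PC a b ≤ PC c d := by
  rw [PC_eq a b, PC_eq c d, PGame.mk_le_mk]
  constructor
  · rintro ⟨⟨p1, p2⟩, hp⟩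
    rw [← PC_eq c d]
    exact hL (p1, p2) hp
  · rintro ⟨⟨p1, p2⟩, hp⟩
    rw [← PC_eq a b]
    exact hR (p1, p2) hp

lemma PC_lf_left {a b c d p1 p2 : ℕ}
    (h : (p2 = d ∧ p1 < c ∧ Even (p1 + d)) ∨ (p1 = c ∧ p2 < d ∧ Even (c + p2)))
    (hle : PC a b ≤ PC p1 p2) : PC a b ⧏ PC c d := by
  rw [PC_eq c d]
  exact PGame.lf_mk_of_le ⟨(p1, p2), h⟩ hle

lemma PC_lf_right {a b c d p1 p2 : ℕ}
    (h : (p2 = b ∧ p1 < a ∧ Odd (p1 + b)) ∨ (p1 = a ∧ p2 < b ∧ Odd (a + p2)))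
    (hle : PC p1 p2 ≤ PC c d) : PC a b ⧏ PC c d := by
  rw [PC_eq a b]
  exact PGame.mk_lf_of_le ⟨(p1, p2), h⟩ hle

/-- An auxiliary rank: for even-sum positions, the game value depends only on this rank. -/
def pcRank (a b : ℕ) : ℕ := a + b - 2 * (a % 2)

lemma PC_key : ∀ N a b c d : ℕ, a + b + c + d ≤ N →
    ((Even (a + b) → Odd (c + d) → PC a b ⧏ PC c d) ∧
     (Odd (a + b) → Odd (c + d) → c + d ≤ a + b → PC a b ≤ PC c d) ∧
     (Odd (a + b) → Odd (c + d) → c + d < a + b → PC a b ⧏ PC c d) ∧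
     (Even (a + b) → Even (c + d) → pcRank a b ≤ pcRank c d → PC a b ≤ PC c d) ∧
     (Even (a + b) → Even (c + d) → pcRank a b < pcRank c d → PC a b ⧏ PC c d)) := by
  intro N
  induction N using Nat.strong_induction_on with
  | _ N IH =>
  intro a b c d hN
  have K1 : ∀ a' b' c' d' : ℕ, a' + b' + c' + d' < a + b + c + d →
      Even (a' + b') → Odd (c' + d') → PC a' b' ⧏ PC c' d' :=
    fun a' b' c' d' h => (IH (a' + b' + c' + d') (by omega) a' b' c' d' le_rfl).1
  have K2 : ∀ a' b' c' d' : ℕ, a' + b' + c' + d' < a + b + c + d →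
      Odd (a' + b') → Odd (c' + d') → c' + d' ≤ a' + b' → PC a' b' ≤ PC c' d' :=
    fun a' b' c' d' h => (IH (a' + b' + c' + d') (by omega) a' b' c' d' le_rfl).2.1
  have K3 : ∀ a' b' c' d' : ℕ, a' + b' + c' + d' < a + b + c + d →
      Odd (a' + b') → Odd (c' + d') → c' + d' < a' + b' → PC a' b' ⧏ PC c' d' :=
    fun a' b' c' d' h => (IH (a' + b' + c' + d') (by omega) a' b' c' d' le_rfl).2.2.1
  have K4 : ∀ a' b' c' d' : ℕ, a' + b' + c' + d' < a + b + c + d →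
      Even (a' + b') → Even (c' + d') → pcRank a' b' ≤ pcRank c' d' → PC a' b' ≤ PC c' d' :=
    fun a' b' c' d' h => (IH (a' + b' + c' + d') (by omega) a' b' c' d' le_rfl).2.2.2.1
  have K5 : ∀ a' b' c' d' : ℕ, a' + b' + c' + d' < a + b + c + d →
      Even (a' + b') → Even (c' + d') → pcRank a' b' < pcRank c' d' → PC a' b' ⧏ PC c' d' :=
    fun a' b' c' d' h => (IH (a' + b' + c' + d') (by omega) a' b' c' d' le_rfl).2.2.2.2
  refine ⟨?_, ?_, ?_, ?_, ?_⟩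
  -- L1 : even ⧏ odd
  · intro hE hO
    have h1 := Nat.even_iff.mp hE
    have h2 := Nat.odd_iff.mp hO
    by_cases hlt : a + b < c + d
    · by_cases hc : c % 2 = 0
      · refine PC_lf_left (p1 := c) (p2 := d - 1)
          (Or.inr ⟨rfl, by omega, Nat.even_iff.mpr (by omega)⟩) ?_
        exact K4 a b c (d - 1) (by omega) hE (Nat.even_iff.mpr (by omega))
          (by unfold pcRank; omega)
      · refine PC_lf_left (p1 := c - 1) (p2 := d)
          (Or.inl ⟨rfl, by omega, Nat.even_iff.mpr (by omega)⟩) ?_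
        exact K4 a b (c - 1) d (by omega) hE (Nat.even_iff.mpr (by omega))
          (by unfold pcRank; omega)
    · by_cases ha : 1 ≤ a
      · refine PC_lf_right (p1 := a - 1) (p2 := b)
          (Or.inl ⟨rfl, by omega, Nat.odd_iff.mpr (by omega)⟩) ?_
        exact K2 (a - 1) b c d (by omega) (Nat.odd_iff.mpr (by omega)) hO (by omega)
      · refine PC_lf_right (p1 := a) (p2 := b - 1)
          (Or.inr ⟨rfl, by omega, Nat.odd_iff.mpr (by omega)⟩) ?_
        exact K2 a (b - 1) c d (by omega) (Nat.odd_iff.mpr (by omega)) hO (by omega)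
  -- L2 : odd ≤ odd with smaller-or-equal sum
  · intro hO1 hO2 hts
    have h1 := Nat.odd_iff.mp hO1
    have h2 := Nat.odd_iff.mp hO2
    refine PC_le ?_ ?_
    · rintro ⟨p1, p2⟩ (⟨rfl, hlt, hev⟩ | ⟨rfl, hlt, hev⟩)
      · exact K1 p1 p2 c d (by omega) hev hO2
      · exact K1 p1 p2 c d (by omega) hev hO2
    · rintro ⟨p1, p2⟩ (⟨rfl, hlt, hod⟩ | ⟨rfl, hlt, hod⟩)
      · exact K3 a b p1 p2 (by omega) hO1 hod
          (by have := Nat.odd_iff.mp hod; omega)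
      · exact K3 a b p1 p2 (by omega) hO1 hod
          (by have := Nat.odd_iff.mp hod; omega)
  -- L3 : odd ⧏ odd with strictly smaller sum
  · intro hO1 hO2 hts
    have h1 := Nat.odd_iff.mp hO1
    have h2 := Nat.odd_iff.mp hO2
    by_cases ha : 2 ≤ a
    · refine PC_lf_right (p1 := a - 2) (p2 := b)
        (Or.inl ⟨rfl, by omega, Nat.odd_iff.mpr (by omega)⟩) ?_
      exact K2 (a - 2) b c d (by omega) (Nat.odd_iff.mpr (by omega)) hO2 (by omega)
    · refine PC_lf_right (p1 := a) (p2 := b - 2)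
        (Or.inr ⟨rfl, by omega, Nat.odd_iff.mpr (by omega)⟩) ?_
      exact K2 a (b - 2) c d (by omega) (Nat.odd_iff.mpr (by omega)) hO2 (by omega)
  -- L4 : even ≤ even with smaller-or-equal rank
  · intro hE1 hE2 hr
    have h1 := Nat.even_iff.mp hE1
    have h2 := Nat.even_iff.mp hE2
    unfold pcRank at hr
    refine PC_le ?_ ?_
    · rintro ⟨p1, p2⟩ (⟨rfl, hlt, hev⟩ | ⟨rfl, hlt, hev⟩)
      · exact K5 p1 p2 c d (by omega) hev hE2
          (by unfold pcRank; have := Nat.even_iff.mp hev; omega)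
      · exact K5 p1 p2 c d (by omega) hev hE2
          (by unfold pcRank; have := Nat.even_iff.mp hev; omega)
    · rintro ⟨p1, p2⟩ (⟨rfl, hlt, hod⟩ | ⟨rfl, hlt, hod⟩)
      · exact K1 a b p1 p2 (by omega) hE1 hod
      · exact K1 a b p1 p2 (by omega) hE1 hod
  -- L5 : even ⧏ even with strictly smaller rank
  · intro hE1 hE2 hr
    have h1 := Nat.even_iff.mp hE1
    have h2 := Nat.even_iff.mp hE2
    unfold pcRank at hr
    by_cases hc : 2 ≤ c
    · refine PC_lf_left (p1 := c - 2) (p2 := d)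
        (Or.inl ⟨rfl, by omega, Nat.even_iff.mpr (by omega)⟩) ?_
      exact K4 a b (c - 2) d (by omega) hE1 (Nat.even_iff.mpr (by omega))
        (by unfold pcRank; omega)
    · refine PC_lf_left (p1 := c) (p2 := d - 2)
        (Or.inr ⟨rfl, by omega, Nat.even_iff.mpr (by omega)⟩) ?_
      exact K4 a b c (d - 2) (by omega) hE1 (Nat.even_iff.mpr (by omega))
        (by unfold pcRank; omega)

theorem stmt_6 (n m n' m' : ℕ) (hsum : n + m = n' + m') (hodd : Odd (n + m)) :
    (PC n m).Equiv (PC n' m') := by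
  have key := fun (a b c d : ℕ) (h1 : Odd (a + b)) (h2 : Odd (c + d)) (h3 : c + d ≤ a + b) =>
    (PC_key (a + b + c + d) a b c d le_rfl).2.1 h1 h2 h3
  exact ⟨key n m n' m' hodd (hsum ▸ hodd) (by omega),
         key n' m' n m (hsum ▸ hodd) hodd (by omega)⟩
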